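/- Let p be an odd prime, n and r ≥ 1 natural numbers, and suppose f_0, f_1, …, f_r : ℚ_p → ℚ_p are functions such that f_0(x) = x^n for all x, and for each j < r and each x ∈ ℚ_p the sequence N ↦ Σ_{u=0}^{p^N−1} (−1)^u f_j(x+u) converges in ℚ_p to f_{j+1}(x). Then for every x ∈ ℚ_p, f_r(x) = Σ_{k=0}^{n} (n choose k) E_k^{(r)} x^{n−k}, where E_k^{(r)} ∈ ℚ are the Euler numbers of order r viewed in ℚ_p via the canonical map; that is, ∫_{ℤ_p}⋯∫_{ℤ_p} (x_1+⋯+x_r+x)^n dμ_{−1}(x_1)⋯dμ_{−1}(x_r) = E_n^{(r)}(x), the n-th Euler polynomial of order r evaluated at x. -/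

import Mathlib

open Filter Finset

/-- The `n`-th Euler number of order `r`:
`E_n^{(r)} = ∑_{i₁+⋯+i_r = n} (n!/(i₁!⋯i_r!)) E_{i₁} ⋯ E_{i_r}`, built from a sequence
`E : ℕ → ℚ` of Euler numbers. -/
def eulerNumberOrder (E : ℕ → ℚ) (r n : ℕ) : ℚ :=
  ∑ i ∈ Finset.Nat.antidiagonalTuple r n,
    (Nat.multinomial Finset.univ i : ℚ) * ∏ j : Fin r, E (i j)

section Aux

variable {K : Type*} [Field K] [CharZero K]

lemma choose_sub_comm (m k i : ℕ) :
    m.choose k * (m - k).choose i = m.choose i * (m - i).choose k := by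
  rcases le_or_gt (k + i) m with h | h
  · have h1 := Nat.choose_mul (n := m) (k := k + i) (s := k) (Nat.le_add_right _ _)
    have h2 := Nat.choose_mul (n := m) (k := k + i) (s := i) (Nat.le_add_left _ _)
    have hs : (k + i).choose k = (k + i).choose i := by
      rw [← Nat.choose_symm (Nat.le_add_right k i)]; congr 1; omega
    rw [Nat.add_sub_cancel_left] at h1
    rw [show k + i - i = k by omega] at h2
    rw [← h1, ← h2, hs]
  · rcases le_or_gt k m with hk | hk
    · rcases le_or_gt i m with hi | hi
      · rw [Nat.choose_eq_zero_of_lt (show m - k < i by omega),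
          Nat.choose_eq_zero_of_lt (show m - i < k by omega), mul_zero, mul_zero]
      · rw [Nat.choose_eq_zero_of_lt hi, Nat.choose_eq_zero_of_lt (show m - k < i by omega),
          mul_zero, zero_mul]
    · rw [Nat.choose_eq_zero_of_lt hk]
      rcases le_or_gt i m with hi | hi
      · rw [Nat.choose_eq_zero_of_lt (show m - i < k by omega), zero_mul, mul_zero]
      · rw [Nat.choose_eq_zero_of_lt hi, zero_mul, zero_mul]

variable {K : Type*} [Field K] [CharZero K]

lemma eulerPoly_reflect (E : ℕ → ℚ) (hE0 : E 0 = 1)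
    (hE : ∀ n : ℕ, 1 ≤ n → (∑ k ∈ Finset.range (n + 1), (n.choose k : ℚ) * E k) + E n = 0)
    (m : ℕ) (x : K) :
    (∑ k ∈ range (m + 1), (m.choose k : K) * (E k : K) * (x + 1) ^ (m - k))
      + (∑ k ∈ range (m + 1), (m.choose k : K) * (E k : K) * x ^ (m - k)) = 2 * x ^ m := by
  have hEK : ∀ n : ℕ, 1 ≤ n →
      (∑ k ∈ range (n + 1), (n.choose k : K) * (E k : K)) + (E n : K) = 0 := by
    intro n hn
    have := congrArg (fun q : ℚ => (q : K)) (hE n hn)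
    push_cast at this
    simpa using this
  have step1 : ∀ k ∈ range (m + 1),
      (m.choose k : K) * (E k : K) * (x + 1) ^ (m - k)
        = ∑ i ∈ range (m + 1),
            (m.choose k : K) * (E k : K) * (x ^ i * ((m - k).choose i : K)) := by
    intro k hk
    rw [add_pow]
    simp only [one_pow, mul_one]
    rw [← Finset.sum_subset (Finset.range_subset_range.2 (by omega : m - k + 1 ≤ m + 1))
        (fun i hi' hi => by
          rw [Nat.choose_eq_zero_of_lt (n := m - k) (k := i) (by simp at hi; omega),
            Nat.cast_zero, mul_zero]
          simp),
      Finset.mul_sum]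
  rw [Finset.sum_congr rfl step1, Finset.sum_comm]
  have step2 : (∑ k ∈ range (m + 1), (m.choose k : K) * (E k : K) * x ^ (m - k))
      = ∑ i ∈ range (m + 1), (m.choose i : K) * (E (m - i) : K) * x ^ i := by
    rw [← Finset.sum_range_reflect]
    refine Finset.sum_congr rfl fun i hi => ?_
    simp only [Finset.mem_range] at hi
    rw [show m + 1 - 1 - i = m - i from by omega,
      Nat.choose_symm (show i ≤ m by omega), show m - (m - i) = i from by omega]
  rw [step2, ← Finset.sum_add_distrib]
  have key : ∀ i ∈ range (m + 1),
      ((∑ k ∈ range (m + 1), (m.choose k : K) * (E k : K) * (x ^ i * ((m - k).choose i : K)))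
        + (m.choose i : K) * (E (m - i) : K) * x ^ i)
      = (if i = m then 2 else 0) * x ^ i := by
    intro i hi
    simp only [Finset.mem_range] at hi
    have inner : (∑ k ∈ range (m + 1),
        (m.choose k : K) * (E k : K) * (x ^ i * ((m - k).choose i : K)))
        = ((m.choose i : K) * ∑ k ∈ range (m - i + 1), ((m - i).choose k : K) * (E k : K)) * x ^ i := by
      have h1 : ∀ k ∈ range (m + 1),
          (m.choose k : K) * (E k : K) * (x ^ i * ((m - k).choose i : K))
            = (m.choose i : K) * (((m - i).choose k : K) * (E k : K)) * x ^ i := by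
        intro k _
        have hcc : (m.choose k : K) * ((m - k).choose i : K)
            = (m.choose i : K) * ((m - i).choose k : K) := by
          exact_mod_cast congrArg (fun t : ℕ => (t : K)) (choose_sub_comm m k i)
        calc (m.choose k : K) * (E k : K) * (x ^ i * ((m - k).choose i : K))
            = (m.choose k : K) * ((m - k).choose i : K) * (E k : K) * x ^ i := by ring
          _ = (m.choose i : K) * ((m - i).choose k : K) * (E k : K) * x ^ i := by rw [hcc]
          _ = (m.choose i : K) * (((m - i).choose k : K) * (E k : K)) * x ^ i := by ring
      rw [Finset.sum_congr rfl h1]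
      have hext : (∑ k ∈ range (m - i + 1),
          (m.choose i : K) * (((m - i).choose k : K) * (E k : K)) * x ^ i)
          = ∑ k ∈ range (m + 1),
            (m.choose i : K) * (((m - i).choose k : K) * (E k : K)) * x ^ i := by
        refine Finset.sum_subset (Finset.range_subset_range.2 (by omega : m - i + 1 ≤ m + 1))
          fun k hk' hk => ?_
        simp only [Finset.mem_range, not_lt] at hk
        rw [Nat.choose_eq_zero_of_lt (n := m - i) (k := k) (by omega), Nat.cast_zero,
          zero_mul, mul_zero, zero_mul]
      rw [← hext, Finset.mul_sum, Finset.sum_mul]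
    rw [inner]
    rcases eq_or_lt_of_le (Nat.lt_succ_iff.mp hi) with rfl | hlt
    · simp only [if_pos rfl, Nat.sub_self, Nat.choose_self, Nat.cast_one]
      simp [hE0]
      ring
    · rw [if_neg (by omega)]
      have hsum := eq_neg_of_add_eq_zero_left (hEK (m - i) (by omega))
      rw [hsum]
      ring
  rw [Finset.sum_congr rfl key]
  have final : ∀ i ∈ range (m + 1),
      (if i = m then (2 : K) else 0) * x ^ i = if i = m then 2 * x ^ m else 0 := by
    intro i _
    split <;> simp_all
  rw [Finset.sum_congr rfl final, Finset.sum_ite_eq' (range (m + 1)) m fun _ => (2 : K) * x ^ m]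
  simp

lemma euler_telescope (E : ℕ → ℚ) (hE0 : E 0 = 1)
    (hE : ∀ n : ℕ, 1 ≤ n → (∑ k ∈ Finset.range (n + 1), (n.choose k : ℚ) * E k) + E n = 0)
    (m : ℕ) (x : K) : ∀ M : ℕ,
    2 * ∑ u ∈ range M, (-1 : K) ^ u * (x + u) ^ m
      = (∑ k ∈ range (m + 1), (m.choose k : K) * (E k : K) * x ^ (m - k))
        - (-1 : K) ^ M *
            ∑ k ∈ range (m + 1), (m.choose k : K) * (E k : K) * (x + M) ^ (m - k) := by
  intro M
  induction M with
  | zero => simp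
  | succ M ih =>
    rw [Finset.sum_range_succ, mul_add, ih]
    have hcast : (x + ((M : K) + 1)) = (x + (M : K)) + 1 := by ring
    push_cast
    rw [hcast]
    have R := eulerPoly_reflect E hE0 hE m (x + (M : K))
    linear_combination (-(-1 : K) ^ M) * R

lemma euler_tendsto (p : ℕ) [Fact p.Prime] (hp : Odd p) (E : ℕ → ℚ) (hE0 : E 0 = 1)
    (hE : ∀ n : ℕ, 1 ≤ n → (∑ k ∈ Finset.range (n + 1), (n.choose k : ℚ) * E k) + E n = 0)
    (m : ℕ) (x : ℚ_[p]) :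
    Tendsto (fun N : ℕ => ∑ u ∈ Finset.range (p ^ N), (-1 : ℚ_[p]) ^ u * (x + (u : ℚ_[p])) ^ m)
      atTop (nhds (∑ k ∈ range (m + 1), (m.choose k : ℚ_[p]) * (E k : ℚ_[p]) * x ^ (m - k))) := by
  set P : ℚ_[p] → ℚ_[p] := fun y => ∑ k ∈ range (m + 1),
    (m.choose k : ℚ_[p]) * (E k : ℚ_[p]) * y ^ (m - k) with hP
  have hcont : Continuous P := by
    apply continuous_finset_sum
    intro k _
    exact (continuous_const.mul (continuous_pow (M := ℚ_[p]) (m - k)))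
  have hpow : Tendsto (fun N : ℕ => (p : ℚ_[p]) ^ N) atTop (nhds 0) :=
    tendsto_pow_atTop_nhds_zero_of_norm_lt_one Padic.norm_p_lt_one
  have harg : Tendsto (fun N : ℕ => x + (p : ℚ_[p]) ^ N) atTop (nhds x) := by
    simpa using tendsto_const_nhds.add hpow
  have hPx : Tendsto (fun N : ℕ => P (x + (p : ℚ_[p]) ^ N)) atTop (nhds (P x)) :=
    (hcont.tendsto x).comp harg
  have key : ∀ N : ℕ, (fun N : ℕ => ∑ u ∈ Finset.range (p ^ N),
      (-1 : ℚ_[p]) ^ u * (x + (u : ℚ_[p])) ^ m) N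
      = (2 : ℚ_[p])⁻¹ * (P x + P (x + (p : ℚ_[p]) ^ N)) := by
    intro N
    have ht := euler_telescope E hE0 hE m x (p ^ N)
    rw [(hp.pow).neg_one_pow] at ht
    push_cast at ht
    simp only [hP]
    rw [inv_mul_eq_div, eq_div_iff (two_ne_zero)]
    linear_combination ht
  rw [funext key]
  have hconst : Tendsto (fun _ : ℕ => P x) atTop (nhds (P x)) := tendsto_const_nhds
  have hfin := (hconst.add hPx).const_mul ((2 : ℚ_[p])⁻¹)
  rw [show (2 : ℚ_[p])⁻¹ * (P x + P x) = P x by ring] at hfin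
  simpa [hP, mul_comm] using hfin

lemma multinomial_cons_nat (r a : ℕ) (x : Fin r → ℕ) :
    Nat.multinomial Finset.univ (Fin.cons a x)
      = (a + ∑ j, x j).choose a * Nat.multinomial Finset.univ x := by
  have hD : 0 < a.factorial * ∏ j, (x j).factorial :=
    Nat.mul_pos a.factorial_pos (Finset.prod_pos fun j _ => (x j).factorial_pos)
  refine Nat.eq_of_mul_eq_mul_left hD ?_
  have h1 := Nat.multinomial_spec (s := (Finset.univ : Finset (Fin (r + 1))))
    (f := Fin.cons a x)
  have h2 := Nat.multinomial_spec (s := (Finset.univ : Finset (Fin r))) (f := x)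
  have h3 := Nat.choose_mul_factorial_mul_factorial (Nat.le_add_right a (∑ j, x j))
  rw [Fin.prod_univ_succ, Fin.sum_univ_succ] at h1
  simp only [Fin.cons_zero, Fin.cons_succ] at h1
  rw [Nat.add_sub_cancel_left] at h3
  calc a.factorial * (∏ j, (x j).factorial) * Nat.multinomial Finset.univ (Fin.cons a x)
      = (a + ∑ j, x j).factorial := h1
    _ = (a + ∑ j, x j).choose a * a.factorial * (∑ j, x j).factorial := h3.symm
    _ = (a + ∑ j, x j).choose a * a.factorial * ((∏ j, (x j).factorial) * Nat.multinomial Finset.univ x) := by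
        rw [h2]
    _ = a.factorial * (∏ j, (x j).factorial) * ((a + ∑ j, x j).choose a * Nat.multinomial Finset.univ x) := by
        ring

lemma sum_antidiagonalTuple_succ {M : Type*} [AddCommMonoid M] (r s : ℕ)
    (g : (Fin (r + 1) → ℕ) → M) :
    ∑ i ∈ Finset.Nat.antidiagonalTuple (r + 1) s, g i
      = ∑ ab ∈ Finset.HasAntidiagonal.antidiagonal s,
          ∑ x ∈ Finset.Nat.antidiagonalTuple r ab.2, g (Fin.cons ab.1 x) := by
  rw [show (∑ ab ∈ Finset.HasAntidiagonal.antidiagonal s, ∑ x ∈ Finset.Nat.antidiagonalTuple r ab.2,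
      g (Fin.cons ab.1 x))
      = ∑ q ∈ (Finset.HasAntidiagonal.antidiagonal s).sigma (fun ab => Finset.Nat.antidiagonalTuple r ab.2),
        g (Fin.cons q.1.1 q.2) from (Finset.sum_sigma (Finset.HasAntidiagonal.antidiagonal s)
        (fun ab => Finset.Nat.antidiagonalTuple r ab.2)
        (fun q => g (Fin.cons q.1.1 q.2))).symm]
  refine Finset.sum_nbij' (fun t => (⟨(t 0, ∑ j, Fin.tail t j), Fin.tail t⟩ :
      Σ _ab : ℕ × ℕ, (Fin r → ℕ))) (fun q => Fin.cons q.1.1 q.2) ?_ ?_ ?_ ?_ ?_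
  · intro t ht
    rw [Finset.Nat.mem_antidiagonalTuple] at ht
    simp only [Finset.mem_sigma, Finset.HasAntidiagonal.mem_antidiagonal,
      Finset.Nat.mem_antidiagonalTuple]
    refine ⟨?_, trivial⟩
    rw [← ht, Fin.sum_univ_succ]
    rfl
  · intro q hq
    simp only [Finset.mem_sigma, Finset.HasAntidiagonal.mem_antidiagonal,
      Finset.Nat.mem_antidiagonalTuple] at hq
    rw [Finset.Nat.mem_antidiagonalTuple, Fin.sum_univ_succ]
    simp only [Fin.cons_zero, Fin.cons_succ]
    rw [hq.2, hq.1]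
  · intro t ht
    exact Fin.cons_self_tail t
  · intro q hq
    simp only [Finset.mem_sigma, Finset.HasAntidiagonal.mem_antidiagonal,
      Finset.Nat.mem_antidiagonalTuple] at hq
    refine Sigma.ext ?_ (heq_of_eq ?_)
    · simp only [Fin.cons_zero, Fin.tail_cons]
      rw [hq.2]
    · simp only [Fin.tail_cons]
  · intro t ht
    simp only [Fin.cons_self_tail]

lemma eulerNumberOrder_succ (E : ℕ → ℚ) (r s : ℕ) :
    eulerNumberOrder E (r + 1) s
      = ∑ k ∈ range (s + 1), (s.choose k : ℚ) * E k * eulerNumberOrder E r (s - k) := by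
  rw [eulerNumberOrder, sum_antidiagonalTuple_succ,
    Finset.Nat.sum_antidiagonal_eq_sum_range_succ_mk]
  refine Finset.sum_congr rfl fun k hk => ?_
  simp only [Finset.mem_range] at hk
  rw [eulerNumberOrder, Finset.mul_sum]
  refine Finset.sum_congr rfl fun x hx => ?_
  have hxs : ∑ j, x j = s - k := Finset.Nat.mem_antidiagonalTuple.mp hx
  have hprod : (∏ j : Fin (r + 1), E ((Fin.cons k x : Fin (r+1) → ℕ) j)) = E k * ∏ j : Fin r, E (x j) := by
    rw [Fin.prod_univ_succ]
    simp only [Fin.cons_zero, Fin.cons_succ]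
  rw [multinomial_cons_nat, hprod, hxs, show k + (s - k) = s from by omega]
  push_cast
  ring

lemma order_step (E : ℕ → ℚ) (n j : ℕ) (x : K) :
    ∑ k ∈ range (n + 1), (n.choose k : K) * (eulerNumberOrder E j k : K) *
        (∑ i ∈ range (n - k + 1), ((n - k).choose i : K) * (E i : K) * x ^ (n - k - i))
      = ∑ s ∈ range (n + 1),
          (n.choose s : K) * (eulerNumberOrder E (j + 1) s : K) * x ^ (n - s) := by
  -- canonical form
  set F : ℕ → ℕ → K := fun t m =>
    ((n.choose t : K) * ((n - t).choose m : K)) * (E t : K) *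
      (eulerNumberOrder E j m : K) * x ^ (n - t - m) with hF
  have hLHS : (∑ k ∈ range (n + 1), (n.choose k : K) * (eulerNumberOrder E j k : K) *
      (∑ i ∈ range (n - k + 1), ((n - k).choose i : K) * (E i : K) * x ^ (n - k - i)))
      = ∑ t ∈ range (n + 1), ∑ m ∈ range (n + 1), F t m := by
    have L1 : ∀ k ∈ range (n + 1),
        (n.choose k : K) * (eulerNumberOrder E j k : K) *
          (∑ i ∈ range (n - k + 1), ((n - k).choose i : K) * (E i : K) * x ^ (n - k - i))
        = ∑ i ∈ range (n + 1), (n.choose k : K) * (eulerNumberOrder E j k : K) *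
            (((n - k).choose i : K) * (E i : K) * x ^ (n - k - i)) := by
      intro k hk
      simp only [Finset.mem_range] at hk
      have hext : (∑ i ∈ range (n - k + 1),
          (n.choose k : K) * (eulerNumberOrder E j k : K) *
            (((n - k).choose i : K) * (E i : K) * x ^ (n - k - i)))
          = ∑ i ∈ range (n + 1), (n.choose k : K) * (eulerNumberOrder E j k : K) *
            (((n - k).choose i : K) * (E i : K) * x ^ (n - k - i)) := by
        refine Finset.sum_subset (Finset.range_subset_range.2 (by omega)) fun i hi' hi => ?_
        simp only [Finset.mem_range, not_lt] at hi' hi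
        rw [Nat.choose_eq_zero_of_lt (n := n - k) (k := i) (by omega)]
        simp
      rw [← hext, Finset.mul_sum]
    rw [Finset.sum_congr rfl L1, Finset.sum_comm]
    refine Finset.sum_congr rfl fun i hi => Finset.sum_congr rfl fun k hk => ?_
    have hcc : (n.choose k : K) * ((n - k).choose i : K)
        = (n.choose i : K) * ((n - i).choose k : K) := by
      exact_mod_cast congrArg (fun t : ℕ => (t : K)) (choose_sub_comm n k i)
    rw [hF]
    have hsub : n - k - i = n - i - k := by omega
    calc (n.choose k : K) * (eulerNumberOrder E j k : K) *
          (((n - k).choose i : K) * (E i : K) * x ^ (n - k - i))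
        = (n.choose k : K) * ((n - k).choose i : K) * (E i : K) *
            (eulerNumberOrder E j k : K) * x ^ (n - k - i) := by ring
      _ = (n.choose i : K) * ((n - i).choose k : K) * (E i : K) *
            (eulerNumberOrder E j k : K) * x ^ (n - i - k) := by rw [hcc, hsub]
  have hRHS : (∑ s ∈ range (n + 1),
      (n.choose s : K) * (eulerNumberOrder E (j + 1) s : K) * x ^ (n - s))
      = ∑ t ∈ range (n + 1), ∑ m ∈ range (n + 1), F t m := by
    have R0 : ∀ s ∈ range (n + 1),
        (n.choose s : K) * (eulerNumberOrder E (j + 1) s : K) * x ^ (n - s)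
        = ∑ t ∈ range (n + 1), ((n.choose s : K) * ((s.choose t : K) * (E t : K) *
            (eulerNumberOrder E j (s - t) : K))) * x ^ (n - s) := by
      intro s hs
      simp only [Finset.mem_range] at hs
      have hcast : ((eulerNumberOrder E (j + 1) s : ℚ) : K)
          = ∑ t ∈ range (s + 1), (s.choose t : K) * (E t : K) *
              (eulerNumberOrder E j (s - t) : K) := by
        rw [eulerNumberOrder_succ]
        push_cast
        rfl
      have hext : (∑ t ∈ range (s + 1), ((n.choose s : K) * ((s.choose t : K) * (E t : K) *
            (eulerNumberOrder E j (s - t) : K))) * x ^ (n - s))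
          = ∑ t ∈ range (n + 1), ((n.choose s : K) * ((s.choose t : K) * (E t : K) *
            (eulerNumberOrder E j (s - t) : K))) * x ^ (n - s) := by
        refine Finset.sum_subset (Finset.range_subset_range.2 (by omega)) fun t ht' ht => ?_
        simp only [Finset.mem_range, not_lt] at ht' ht
        rw [Nat.choose_eq_zero_of_lt (n := s) (k := t) (by omega)]
        simp
      rw [hcast, ← hext, Finset.mul_sum, Finset.sum_mul]
    rw [Finset.sum_congr rfl R0, Finset.sum_comm]
    refine Finset.sum_congr rfl fun t ht => ?_
    simp only [Finset.mem_range] at ht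
    have hres : (∑ s ∈ Finset.Ico t (n + 1), ((n.choose s : K) * ((s.choose t : K) * (E t : K) *
          (eulerNumberOrder E j (s - t) : K))) * x ^ (n - s))
        = ∑ s ∈ range (n + 1), ((n.choose s : K) * ((s.choose t : K) * (E t : K) *
          (eulerNumberOrder E j (s - t) : K))) * x ^ (n - s) := by
      refine Finset.sum_subset (fun s hs => ?_) fun s hs' hs => ?_
      · simp only [Finset.mem_Ico] at hs
        simp only [Finset.mem_range]
        omega
      · simp only [Finset.mem_range] at hs'
        simp only [Finset.mem_Ico, not_and, not_lt] at hs
        rw [Nat.choose_eq_zero_of_lt (n := s) (k := t) (by omega)]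
        simp
    rw [← hres, Finset.sum_Ico_eq_sum_range]
    have hlen : n + 1 - t = n - t + 1 := by omega
    rw [hlen]
    have hext2 : (∑ m ∈ range (n - t + 1), F t m) = ∑ m ∈ range (n + 1), F t m := by
      refine Finset.sum_subset (Finset.range_subset_range.2 (by omega)) fun m hm' hm => ?_
      simp only [Finset.mem_range, not_lt] at hm' hm
      rw [hF]
      simp only
      rw [Nat.choose_eq_zero_of_lt (n := n - t) (k := m) (by omega)]
      simp
    rw [← hext2]
    refine Finset.sum_congr rfl fun m hm => ?_
    simp only [Finset.mem_range] at hm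
    have hch : (n.choose (t + m) : K) * ((t + m).choose t : K)
        = (n.choose t : K) * ((n - t).choose m : K) := by
      have := Nat.choose_mul (n := n) (k := t + m) (s := t) (Nat.le_add_right t m)
      rw [Nat.add_sub_cancel_left] at this
      exact_mod_cast congrArg (fun z : ℕ => (z : K)) this
    rw [hF]
    simp only
    rw [show t + m - t = m from by omega, show n - (t + m) = n - t - m from by omega]
    calc (n.choose (t + m) : K) * (((t + m).choose t : K) * (E t : K) *
          (eulerNumberOrder E j m : K)) * x ^ (n - t - m)
        = (n.choose (t + m) : K) * ((t + m).choose t : K) * (E t : K) *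
          (eulerNumberOrder E j m : K) * x ^ (n - t - m) := by ring
      _ = (n.choose t : K) * ((n - t).choose m : K) * (E t : K) *
          (eulerNumberOrder E j m : K) * x ^ (n - t - m) := by rw [hch]
  rw [hLHS, hRHS]

end Aux

/-- Let `E : ℕ → ℚ` be the Euler numbers, defined by `E 0 = 1` and, for
`n ≥ 1`, `∑_{k=0}^{n} (n choose k) E k + E n = 0`. Let `p` be an odd prime, `n : ℕ`,
`r ≥ 1`, and suppose `f 0, f 1, …, f r : ℚ_[p] → ℚ_[p]` satisfy `f 0 x = x^n` and, for
each `j < r` and each `x`, the sequence `N ↦ ∑_{u=0}^{p^N-1} (-1)^u (f j) (x+u)` converges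
to `(f (j+1)) x`. Then for every `x : ℚ_[p]`,
`f r x = ∑_{k=0}^{n} (n choose k) E_k^{(r)} x^{n-k} = E_n^{(r)}(x)`, the `n`-th Euler
polynomial of order `r` evaluated at `x`. -/
theorem iterated_fermionic_integral_eq_higher_eulerPolynomial (p : ℕ) [Fact p.Prime]
    (hp : Odd p) (E : ℕ → ℚ) (hE0 : E 0 = 1)
    (hE : ∀ n : ℕ, 1 ≤ n → (∑ k ∈ Finset.range (n + 1), (n.choose k : ℚ) * E k) + E n = 0)
    (n r : ℕ) (hr : 1 ≤ r) (f : ℕ → ℚ_[p] → ℚ_[p])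
    (hf0 : ∀ x : ℚ_[p], f 0 x = x ^ n)
    (hf : ∀ j < r, ∀ x : ℚ_[p],
      Tendsto (fun N : ℕ => ∑ u ∈ Finset.range (p ^ N), (-1 : ℚ_[p]) ^ u * f j (x + (u : ℚ_[p])))
        atTop (nhds (f (j + 1) x))) :
    ∀ x : ℚ_[p], f r x = ∑ k ∈ Finset.range (n + 1),
      (n.choose k : ℚ_[p]) * ((eulerNumberOrder E r k : ℚ) : ℚ_[p]) * x ^ (n - k) := by
  have e0 : ∀ k : ℕ, eulerNumberOrder E 0 k = if k = 0 then 1 else 0 := by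
    intro k
    cases k with
    | zero =>
      rw [eulerNumberOrder, Finset.Nat.antidiagonalTuple_zero_zero]
      simp [Nat.multinomial]
    | succ k =>
      rw [eulerNumberOrder, Finset.Nat.antidiagonalTuple_zero_succ]
      simp
  have claim : ∀ j : ℕ, j ≤ r → ∀ x : ℚ_[p], f j x = ∑ k ∈ Finset.range (n + 1),
      (n.choose k : ℚ_[p]) * ((eulerNumberOrder E j k : ℚ) : ℚ_[p]) * x ^ (n - k) := by
    intro j
    induction j with
    | zero =>
      intro _ x
      rw [hf0 x]
      rw [Finset.sum_eq_single_of_mem 0 (Finset.mem_range.2 (by omega))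
        (fun k _ hk => by rw [e0 k, if_neg hk]; simp)]
      rw [e0 0, if_pos rfl]
      simp
    | succ j ih =>
      intro hjr x
      have ihj := ih (by omega)
      have h1 := hf j (by omega) x
      have hfun : ∀ N : ℕ, (fun N : ℕ => ∑ u ∈ Finset.range (p ^ N),
          (-1 : ℚ_[p]) ^ u * f j (x + (u : ℚ_[p]))) N
          = ∑ k ∈ Finset.range (n + 1),
              (n.choose k : ℚ_[p]) * ((eulerNumberOrder E j k : ℚ) : ℚ_[p]) *
                ∑ u ∈ Finset.range (p ^ N), (-1 : ℚ_[p]) ^ u * (x + (u : ℚ_[p])) ^ (n - k) := by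
        intro N
        simp only
        calc (∑ u ∈ Finset.range (p ^ N), (-1 : ℚ_[p]) ^ u * f j (x + (u : ℚ_[p])))
            = ∑ u ∈ Finset.range (p ^ N), ∑ k ∈ Finset.range (n + 1),
                (-1 : ℚ_[p]) ^ u * ((n.choose k : ℚ_[p]) *
                  ((eulerNumberOrder E j k : ℚ) : ℚ_[p]) * (x + (u : ℚ_[p])) ^ (n - k)) := by
              refine Finset.sum_congr rfl fun u _ => ?_
              rw [ihj (x + (u : ℚ_[p])), Finset.mul_sum]
          _ = ∑ k ∈ Finset.range (n + 1), ∑ u ∈ Finset.range (p ^ N),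
                (-1 : ℚ_[p]) ^ u * ((n.choose k : ℚ_[p]) *
                  ((eulerNumberOrder E j k : ℚ) : ℚ_[p]) * (x + (u : ℚ_[p])) ^ (n - k)) :=
              Finset.sum_comm
          _ = ∑ k ∈ Finset.range (n + 1),
              (n.choose k : ℚ_[p]) * ((eulerNumberOrder E j k : ℚ) : ℚ_[p]) *
                ∑ u ∈ Finset.range (p ^ N), (-1 : ℚ_[p]) ^ u * (x + (u : ℚ_[p])) ^ (n - k) := by
              refine Finset.sum_congr rfl fun k _ => ?_
              rw [Finset.mul_sum]
              refine Finset.sum_congr rfl fun u _ => ?_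
              ring
      have h2 : Tendsto (fun N : ℕ => ∑ u ∈ Finset.range (p ^ N),
          (-1 : ℚ_[p]) ^ u * f j (x + (u : ℚ_[p]))) atTop
          (nhds (∑ k ∈ Finset.range (n + 1),
            (n.choose k : ℚ_[p]) * ((eulerNumberOrder E j k : ℚ) : ℚ_[p]) *
              (∑ i ∈ Finset.range (n - k + 1),
                ((n - k).choose i : ℚ_[p]) * (E i : ℚ_[p]) * x ^ (n - k - i)))) := by
        rw [funext hfun]
        refine tendsto_finset_sum _ fun k _ => ?_
        exact (euler_tendsto p hp E hE0 hE (n - k) x).const_mul _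
      have huniq := tendsto_nhds_unique h1 h2
      rw [huniq, order_step E n j x]
  exact claim r le_rfl
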